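/- Let 1 < r, r₁ < ∞ with 1/r > 1/r₁, define r₂ by 1/r₂ := 1/r − 1/r₁, and let r′, r₂′ denote conjugate exponents. Let ε > 0 and let φ : ℝ → ℝ be measurable. Then there exists a constant c > 0, depending only on r, r₁ and ε (in particular independent of φ), such that for every measurable function w : ℝ² → [0, ∞], ∫_ℝ (∫_ℝ w(ξ, τ)^{r₂′} dτ)^{1/r₂′} dξ ≤ c · (∫∫_{ℝ²} ⟨ξ⟩^{(1/r + ε) r′} ⟨τ + φ(ξ)⟩^{(1/r₁ + ε) r′} w(ξ, τ)^{r′} dξ dτ)^{1/r′}, all quantities understood in [0, ∞]. -/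

import Mathlib

open MeasureTheory

/-- Japanese bracket ⟨x⟩ = (1 + x²)^{1/2}. -/
noncomputable def jap (x : ℝ) : ℝ := Real.sqrt (1 + x ^ 2)

lemma jap_pos (x : ℝ) : 0 < jap x := Real.sqrt_pos.mpr (by positivity)

@[fun_prop, measurability]
lemma jap_measurable : Measurable jap :=
  (Real.continuous_sqrt.comp (by continuity)).measurable

lemma jap_rpow_pos (x e : ℝ) : 0 < jap x ^ e := Real.rpow_pos_of_pos (jap_pos x) e

lemma ofReal_jap_rpow (x e₁ e₂ : ℝ) :
    ENNReal.ofReal (jap x ^ e₁) ^ e₂ = ENNReal.ofReal (jap x ^ (e₁ * e₂)) := by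
  rw [ENNReal.ofReal_rpow_of_pos (jap_rpow_pos x e₁), ← Real.rpow_mul (jap_pos x).le]

lemma ofReal_jap_ne_zero (x e : ℝ) : ENNReal.ofReal (jap x ^ e) ≠ 0 :=
  (ENNReal.ofReal_pos.mpr (jap_rpow_pos x e)).ne'

lemma jap_lintegral_lt_top {β : ℝ} (hβ : 1 < β) :
    (∫⁻ x : ℝ, ENNReal.ofReal (jap x ^ (-β))) < ⊤ := by
  have heq : ∀ x : ℝ, jap x ^ (-β) = ((1 : ℝ) + ‖x‖ ^ 2) ^ (-β / 2) := fun x => by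
    rw [Real.norm_eq_abs, sq_abs, jap, Real.sqrt_eq_rpow,
      ← Real.rpow_mul (by positivity : (0:ℝ) ≤ 1 + x ^ 2),
      show (1 / (2:ℝ)) * (-β) = -β / 2 by ring]
  have hint : Integrable (fun x : ℝ => ((1 : ℝ) + ‖x‖ ^ 2) ^ (-β / 2)) :=
    integrable_rpow_neg_one_add_norm_sq (by simpa using hβ)
  simp_rw [heq]
  exact hint.lintegral_lt_top

/-- Embedding (2.5), Fourier-side:
∫_ξ (∫_τ w^{r₂′})^{1/r₂′} dξ ≤ c (∫∫ ⟨ξ⟩^{(1/r+ε)r′} ⟨τ+φ(ξ)⟩^{(1/r₁+ε)r′} w^{r′})^{1/r′},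
where 1/r₂ = 1/r − 1/r₁, with c independent of φ. -/
theorem stmt_9 (r r₁ r₂ r' r₂' ε : ℝ)
    (hr : 1 < r) (hr₁ : 1 < r₁) (h : 1 / r > 1 / r₁) (hr₂ : 1 / r₂ = 1 / r - 1 / r₁)
    (hr' : 1 / r + 1 / r' = 1) (hr₂' : 1 / r₂ + 1 / r₂' = 1) (hε : 0 < ε) :
    ∃ c : ℝ, 0 < c ∧ ∀ φ : ℝ → ℝ, Measurable φ → ∀ w : ℝ × ℝ → ENNReal, Measurable w →
      (∫⁻ ξ : ℝ, (∫⁻ τ : ℝ, w (ξ, τ) ^ r₂') ^ (1 / r₂')) ≤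
        ENNReal.ofReal c *
          (∫⁻ q : ℝ × ℝ,
            ENNReal.ofReal (jap q.1 ^ ((1 / r + ε) * r') *
              jap (q.2 + φ q.1) ^ ((1 / r₁ + ε) * r')) * w q ^ r') ^ (1 / r') := by
  -- basic positivity facts
  have hr0 : (0:ℝ) < r := by linarith
  have hr₁0 : (0:ℝ) < r₁ := by linarith
  have hinvr : 0 < 1 / r := by positivity
  have hinvr1 : 1 / r < 1 := (div_lt_one hr0).mpr hr
  have hinvr₁ : 0 < 1 / r₁ := by positivity
  have hr'inv : 0 < 1 / r' := by linarith
  have hr'0 : 0 < r' := one_div_pos.mp hr'inv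
  have hr'1 : 1 < r' := (div_lt_one hr'0).mp (by linarith)
  have hinvr₂ : 0 < 1 / r₂ := by rw [hr₂]; linarith
  have hr₂0 : 0 < r₂ := one_div_pos.mp hinvr₂
  have hr₂'inv : 0 < 1 / r₂' := by linarith
  have hr₂'0 : 0 < r₂' := one_div_pos.mp hr₂'inv
  have hr₂'1 : 1 < r₂' := (div_lt_one hr₂'0).mp (by linarith)
  have hkey : 1 / r₂' = 1 / r' + 1 / r₁ := by linarith
  have hlt : r₂' < r' := by
    have h1 : 1 / r' < 1 / r₂' := by linarith
    exact (one_div_lt_one_div hr'0 hr₂'0).mp h1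
  -- conjugate exponent pairs
  have hpq : (r' / r₂').HolderConjugate (r₁ / r₂') := by
    rw [Real.holderConjugate_iff]
    constructor
    · exact (one_lt_div hr₂'0).mpr hlt
    · rw [← one_div, ← one_div, one_div_div, one_div_div,
        div_add_div _ _ (ne_of_gt hr'0) (ne_of_gt hr₁0),
        div_eq_one_iff_eq (by positivity)]
      have h2 : r' * r₁ * (1 / r₂') = r' * r₁ * (1 / r' + 1 / r₁) := by rw [hkey]
      field_simp at h2
      linarith
  have hrr' : r.HolderConjugate r' := by
    rw [Real.holderConjugate_iff]
    constructor
    · exact hr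
    · rw [← one_div, ← one_div]; linarith
  -- constants
  set β₁ : ℝ := 1 + ε * r₁ with hβ₁def
  set β₂ : ℝ := 1 + ε * r with hβ₂def
  have hβ₁1 : 1 < β₁ := by rw [hβ₁def]; nlinarith
  have hβ₂1 : 1 < β₂ := by rw [hβ₂def]; nlinarith
  set K₁ : ENNReal := ∫⁻ x : ℝ, ENNReal.ofReal (jap x ^ (-β₁)) with hK₁def
  set K₂ : ENNReal := ∫⁻ x : ℝ, ENNReal.ofReal (jap x ^ (-β₂)) with hK₂def
  have hK₁ : K₁ ≠ ⊤ := (jap_lintegral_lt_top hβ₁1).ne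
  have hK₂ : K₂ ≠ ⊤ := (jap_lintegral_lt_top hβ₂1).ne
  set C : ENNReal := K₁ ^ (1 / r₁) * K₂ ^ (1 / r) with hCdef
  have hK₁f : K₁ ^ (1 / r₁) ≠ ⊤ := (ENNReal.rpow_lt_top_of_nonneg (by positivity) hK₁).ne
  have hK₂f : K₂ ^ (1 / r) ≠ ⊤ := (ENNReal.rpow_lt_top_of_nonneg (by positivity) hK₂).ne
  have hC : C ≠ ⊤ := ENNReal.mul_ne_top hK₁f hK₂f
  refine ⟨C.toReal + 1, by positivity, ?_⟩
  intro φ hφ w hw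
  have hCle : C ≤ ENNReal.ofReal (C.toReal + 1) :=
    calc C = ENNReal.ofReal C.toReal := (ENNReal.ofReal_toReal hC).symm
    _ ≤ _ := ENNReal.ofReal_le_ofReal (by linarith)
  set a : ℝ := (1 / r + ε) * r' with hadef
  set b : ℝ := (1 / r₁ + ε) * r' with hbdef
  set G : ℝ → ENNReal := fun ξ =>
    ∫⁻ τ : ℝ, ENNReal.ofReal (jap (τ + φ ξ) ^ b) * w (ξ, τ) ^ r' with hGdef
  set A : ℝ → ENNReal := fun ξ => ENNReal.ofReal (jap ξ ^ a) with hAdef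
  -- Step 1: Hölder in τ
  have step1 : ∀ ξ : ℝ, (∫⁻ τ : ℝ, w (ξ, τ) ^ r₂') ^ (1 / r₂') ≤
      K₁ ^ (1 / r₁) * G ξ ^ (1 / r') := by
    intro ξ
    set c1 : ℝ := r₂' / r' with hc1def
    have hc10 : 0 ≤ c1 := by positivity
    set B : ℝ → ENNReal := fun τ => ENNReal.ofReal (jap (τ + φ ξ) ^ b) with hBdef
    have hB0 : ∀ τ, B τ ≠ 0 := fun τ => ofReal_jap_ne_zero _ _
    have hBt : ∀ τ, B τ ≠ ⊤ := fun τ => ENNReal.ofReal_ne_top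
    have hBc0 : ∀ τ, B τ ^ c1 ≠ 0 := fun τ =>
      (ENNReal.rpow_pos ((hB0 τ).bot_lt) (hBt τ)).ne'
    have hBct : ∀ τ, B τ ^ c1 ≠ ⊤ := fun τ =>
      ENNReal.rpow_ne_top_of_nonneg hc10 (hBt τ)
    have hwm : Measurable fun τ => w (ξ, τ) := hw.comp measurable_prodMk_left
    have hBm : Measurable B := by fun_prop
    have hfm : Measurable fun τ => (B τ * w (ξ, τ) ^ r') ^ c1 := by fun_prop
    have hgm : Measurable fun τ => (B τ) ^ (-c1) := by fun_prop
    have hold := ENNReal.lintegral_mul_le_Lp_mul_Lq volume hpq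
      hfm.aemeasurable hgm.aemeasurable
    have hfg : ∀ τ, ((fun τ => (B τ * w (ξ, τ) ^ r') ^ c1) *
        (fun τ => (B τ) ^ (-c1))) τ = w (ξ, τ) ^ r₂' := by
      intro τ
      have e1 : (B τ * w (ξ, τ) ^ r') ^ c1 = B τ ^ c1 * w (ξ, τ) ^ r₂' := by
        rw [ENNReal.mul_rpow_of_nonneg _ _ hc10, ← ENNReal.rpow_mul,
          show r' * c1 = r₂' by rw [hc1def]; field_simp]
      simp only [Pi.mul_apply]
      rw [e1, ENNReal.rpow_neg, mul_comm (B τ ^ c1), mul_assoc,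
        ENNReal.mul_inv_cancel (hBc0 τ) (hBct τ), mul_one]
    simp_rw [hfg] at hold
    -- compute the two Hölder factors
    have hfac1 : ∀ τ, ((B τ * w (ξ, τ) ^ r') ^ c1) ^ (r' / r₂') = B τ * w (ξ, τ) ^ r' := by
      intro τ
      rw [← ENNReal.rpow_mul, show c1 * (r' / r₂') = 1 by rw [hc1def]; field_simp,
        ENNReal.rpow_one]
    have hfac2 : ∀ τ, ((B τ) ^ (-c1)) ^ (r₁ / r₂') =
        ENNReal.ofReal (jap (τ + φ ξ) ^ (-β₁)) := by
      intro τ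
      rw [hBdef]
      simp only []
      rw [← ENNReal.rpow_mul, ofReal_jap_rpow,
        show b * (-c1 * (r₁ / r₂')) = -β₁ by rw [hbdef, hc1def, hβ₁def]; field_simp]
    simp_rw [hfac1, hfac2] at hold
    rw [lintegral_add_right_eq_self (fun τ => ENNReal.ofReal (jap τ ^ (-β₁))) (φ ξ)] at hold
    -- now hold : ∫⁻ τ, w (ξ, τ) ^ r₂' ≤ (G ξ) ^ (1/(r'/r₂')) * K₁ ^ (1/(r₁/r₂'))
    have := ENNReal.rpow_le_rpow hold (le_of_lt hr₂'inv)
    calc (∫⁻ τ : ℝ, w (ξ, τ) ^ r₂') ^ (1 / r₂')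
        ≤ ((G ξ) ^ (1 / (r' / r₂')) * K₁ ^ (1 / (r₁ / r₂'))) ^ (1 / r₂') := this
      _ = K₁ ^ (1 / r₁) * G ξ ^ (1 / r') := by
          rw [ENNReal.mul_rpow_of_nonneg _ _ (le_of_lt hr₂'inv),
            ← ENNReal.rpow_mul, ← ENNReal.rpow_mul, mul_comm,
            show 1 / (r' / r₂') * (1 / r₂') = 1 / r' by field_simp,
            show 1 / (r₁ / r₂') * (1 / r₂') = 1 / r₁ by field_simp]
  -- measurability of G
  have hGm : Measurable G := by
    apply Measurable.lintegral_prod_right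
      (f := fun ξ τ => ENNReal.ofReal (jap (τ + φ ξ) ^ b) * w (ξ, τ) ^ r')
    fun_prop
  have hA0 : ∀ ξ, A ξ ≠ 0 := fun ξ => ofReal_jap_ne_zero _ _
  have hAt : ∀ ξ, A ξ ≠ ⊤ := fun ξ => ENNReal.ofReal_ne_top
  have hAm : Measurable A := by fun_prop
  -- Step 2: Hölder in ξ
  have step2 : (∫⁻ ξ : ℝ, G ξ ^ (1 / r')) ≤
      K₂ ^ (1 / r) * (∫⁻ ξ : ℝ, A ξ * G ξ) ^ (1 / r') := by
    have hAc0 : ∀ ξ, A ξ ^ (1 / r') ≠ 0 := fun ξ =>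
      (ENNReal.rpow_pos ((hA0 ξ).bot_lt) (hAt ξ)).ne'
    have hAct : ∀ ξ, A ξ ^ (1 / r') ≠ ⊤ := fun ξ =>
      ENNReal.rpow_ne_top_of_nonneg (le_of_lt hr'inv) (hAt ξ)
    have hum : Measurable fun ξ => A ξ ^ (-(1 / r')) := by fun_prop
    have hvm : Measurable fun ξ => (A ξ * G ξ) ^ (1 / r') := by fun_prop
    have hold := ENNReal.lintegral_mul_le_Lp_mul_Lq volume hrr'
      hum.aemeasurable hvm.aemeasurable
    have hfg : ∀ ξ, ((fun ξ => A ξ ^ (-(1 / r'))) *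
        (fun ξ => (A ξ * G ξ) ^ (1 / r'))) ξ = G ξ ^ (1 / r') := by
      intro ξ
      simp only [Pi.mul_apply]
      rw [ENNReal.mul_rpow_of_nonneg _ _ (le_of_lt hr'inv), ENNReal.rpow_neg,
        ← mul_assoc, ENNReal.inv_mul_cancel (hAc0 ξ) (hAct ξ), one_mul]
    simp_rw [hfg] at hold
    have hfac1 : ∀ ξ, (A ξ ^ (-(1 / r'))) ^ r = ENNReal.ofReal (jap ξ ^ (-β₂)) := by
      intro ξ
      rw [hAdef]
      simp only []
      rw [← ENNReal.rpow_mul, ofReal_jap_rpow,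
        show a * (-(1 / r') * r) = -β₂ by rw [hadef, hβ₂def]; field_simp]
    have hfac2 : ∀ ξ, ((A ξ * G ξ) ^ (1 / r')) ^ r' = A ξ * G ξ := by
      intro ξ
      rw [← ENNReal.rpow_mul, show (1 / r') * r' = 1 by field_simp, ENNReal.rpow_one]
    simp_rw [hfac1, hfac2] at hold
    exact hold
  -- identify the double integral
  have hI : (∫⁻ ξ : ℝ, A ξ * G ξ) =
      ∫⁻ q : ℝ × ℝ, ENNReal.ofReal (jap q.1 ^ a * jap (q.2 + φ q.1) ^ b) * w q ^ r' := by
    rw [MeasureTheory.Measure.volume_eq_prod ℝ ℝ, lintegral_prod _ (by fun_prop)]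
    refine lintegral_congr fun ξ => ?_
    rw [hGdef]
    simp only []
    rw [← lintegral_const_mul' _ _ (hAt ξ)]
    refine lintegral_congr fun τ => ?_
    rw [hAdef]
    simp only []
    rw [ENNReal.ofReal_mul (jap_rpow_pos _ _).le, mul_assoc]
  -- assemble
  calc (∫⁻ ξ : ℝ, (∫⁻ τ : ℝ, w (ξ, τ) ^ r₂') ^ (1 / r₂'))
      ≤ ∫⁻ ξ : ℝ, K₁ ^ (1 / r₁) * G ξ ^ (1 / r') := lintegral_mono step1
    _ = K₁ ^ (1 / r₁) * ∫⁻ ξ : ℝ, G ξ ^ (1 / r') := lintegral_const_mul' _ _ hK₁f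
    _ ≤ K₁ ^ (1 / r₁) * (K₂ ^ (1 / r) * (∫⁻ ξ : ℝ, A ξ * G ξ) ^ (1 / r')) :=
        mul_le_mul_right step2 _
    _ = C * (∫⁻ ξ : ℝ, A ξ * G ξ) ^ (1 / r') := by rw [hCdef, mul_assoc]
    _ = C * (∫⁻ q : ℝ × ℝ,
          ENNReal.ofReal (jap q.1 ^ a * jap (q.2 + φ q.1) ^ b) * w q ^ r') ^ (1 / r') := by
        rw [hI]
    _ ≤ _ := mul_le_mul_left hCle _
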